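/- Let n ≥ 2 and let 𝓛₁,…,𝓛ₙ be pairwise disjoint transversal finite collections of lines in ℝⁿ with |𝓛_i| = L_i, and suppose L₁ ≤ 100. For a point x let N_i(x) denote the number of lines of 𝓛_i through x, and call x a joint if at least one line from each collection passes through x. Then the sum over all joints x of (N₁(x)·N₂(x)⋯Nₙ(x))^{1/(n−1)} is at most 100·(L₁·L₂⋯Lₙ)^{1/(n−1)}. -/
import Mathlib


open Classical

/-- `ℓ` is a line in `ℝⁿ` with direction vector `v`. -/
def IsLineWithDir {n : ℕ} (ℓ : Set (Fin n → ℝ)) (v : Fin n → ℝ) : Prop :=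
  v ≠ 0 ∧ ∃ p : Fin n → ℝ, ℓ = {x | ∃ t : ℝ, x = p + t • v}

/-- `ℓ` is a line in `ℝⁿ`. -/
def IsLine {n : ℕ} (ℓ : Set (Fin n → ℝ)) : Prop :=
  ∃ v : Fin n → ℝ, IsLineWithDir ℓ v

/-- The number of lines of the collection `L` passing through `x`. -/
noncomputable def linesThrough {n : ℕ} (L : Finset (Set (Fin n → ℝ))) (x : Fin n → ℝ) : ℕ :=
  (L.filter (fun ℓ => x ∈ ℓ)).card

/-- The collections `𝓛 i` of lines in `ℝⁿ` are transversal: whenever `n` lines,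
one from each collection, pass through a common point, their direction vectors are
linearly independent. -/
def Transversal {n : ℕ} (𝓛 : Fin n → Finset (Set (Fin n → ℝ))) : Prop :=
  ∀ (x : Fin n → ℝ) (ℓ : Fin n → Set (Fin n → ℝ)) (v : Fin n → (Fin n → ℝ)),
    (∀ i, ℓ i ∈ 𝓛 i) → (∀ i, x ∈ ℓ i) → (∀ i, IsLineWithDir (ℓ i) (v i)) →
    LinearIndependent ℝ v

/-- `x` is a joint: at least one line from each collection passes through `x`. -/
def IsJointPt {n : ℕ} (𝓛 : Fin n → Finset (Set (Fin n → ℝ))) (x : Fin n → ℝ) : Prop :=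
  ∃ ℓ : Fin n → Set (Fin n → ℝ), (∀ i, ℓ i ∈ 𝓛 i) ∧ ∀ i, x ∈ ℓ i

/-- A line is determined by two distinct points on it. -/
lemma line_eq_two_pts {n : ℕ} {ℓ : Set (Fin n → ℝ)} (h : IsLine ℓ) {x y : Fin n → ℝ}
    (hx : x ∈ ℓ) (hy : y ∈ ℓ) (hxy : x ≠ y) :
    ℓ = {z | ∃ t : ℝ, z = x + t • (y - x)} := by
  obtain ⟨v, hv, p, rfl⟩ := h
  obtain ⟨a, rfl⟩ := hx
  obtain ⟨b, rfl⟩ := hy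
  have hab : b - a ≠ 0 := by
    intro hba
    exact hxy (by rw [show a = b by linarith [sub_eq_zero.mp hba]])
  have key : (p + b • v) - (p + a • v) = (b - a) • v := by module
  ext z
  simp only [Set.mem_setOf_eq]
  constructor
  · rintro ⟨t, rfl⟩
    refine ⟨(t - a) / (b - a), ?_⟩
    rw [key, smul_smul, div_mul_cancel₀ _ hab]
    module
  · rintro ⟨s, rfl⟩
    refine ⟨a + s * (b - a), ?_⟩
    rw [key]
    module

/-- Two distinct lines meet in at most one point. -/
lemma eq_pt_of_two_lines {n : ℕ} {ℓ ℓ' : Set (Fin n → ℝ)} (h : IsLine ℓ) (h' : IsLine ℓ')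
    (hne : ℓ ≠ ℓ') {x y : Fin n → ℝ} (hx : x ∈ ℓ) (hy : y ∈ ℓ)
    (hx' : x ∈ ℓ') (hy' : y ∈ ℓ') : x = y := by
  by_contra hxy
  exact hne ((line_eq_two_pts h hx hy hxy).trans (line_eq_two_pts h' hx' hy' hxy).symm)

/-- Base case of multijoints with multiplicities: if the collections are pairwise
disjoint and transversal with `|𝓛₁| ≤ 100`, then
`∑_joints (∏ᵢ Nᵢ(x))^(1/(n-1)) ≤ 100 (∏ᵢ Lᵢ)^(1/(n-1))`. -/
theorem multijoints_with_multiplicities_base_case (n : ℕ) (hn : 2 ≤ n)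
    (𝓛 : Fin n → Finset (Set (Fin n → ℝ)))
    (hlines : ∀ i, ∀ ℓ ∈ 𝓛 i, IsLine ℓ)
    (hdisj : ∀ i j, i ≠ j → Disjoint (𝓛 i) (𝓛 j))
    (htrans : Transversal 𝓛)
    (hsmall : (𝓛 ⟨0, by omega⟩).card ≤ 100) :
    ∃ J : Finset (Fin n → ℝ),
      (∀ x, x ∈ J ↔ IsJointPt 𝓛 x) ∧
      ∑ x ∈ J, (∏ i, (linesThrough (𝓛 i) x : ℝ)) ^ ((1 : ℝ) / ((n : ℝ) - 1)) ≤
        100 * (∏ i, ((𝓛 i).card : ℝ)) ^ ((1 : ℝ) / ((n : ℝ) - 1)) := by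
  set i0 : Fin n := ⟨0, by omega⟩ with hi0
  set i1 : Fin n := ⟨1, by omega⟩ with hi1
  have hi01 : i0 ≠ i1 := by simp [hi0, hi1, Fin.ext_iff]
  -- the set of joints is finite
  have hfin : {x : Fin n → ℝ | IsJointPt 𝓛 x}.Finite := by
    have hsub : {x : Fin n → ℝ | IsJointPt 𝓛 x} ⊆
        ⋃ ℓ₁ ∈ (𝓛 i0 : Set (Set (Fin n → ℝ))), ⋃ ℓ₂ ∈ (𝓛 i1 : Set (Set (Fin n → ℝ))),
          ℓ₁ ∩ ℓ₂ := by
      rintro x ⟨ℓ, hmem, hthru⟩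
      exact Set.mem_biUnion (hmem i0) (Set.mem_biUnion (hmem i1) ⟨hthru i0, hthru i1⟩)
    refine Set.Finite.subset (Set.Finite.biUnion (𝓛 i0).finite_toSet fun ℓ₁ h₁ =>
      Set.Finite.biUnion (𝓛 i1).finite_toSet fun ℓ₂ h₂ => ?_) hsub
    have hne : ℓ₁ ≠ ℓ₂ := fun h =>
      Finset.disjoint_left.mp (hdisj i0 i1 hi01) h₁ (h ▸ h₂)
    exact Set.Subsingleton.finite fun x hx y hy =>
      eq_pt_of_two_lines (hlines i0 ℓ₁ h₁) (hlines i1 ℓ₂ h₂) hne hx.1 hy.1 hx.2 hy.2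
  refine ⟨hfin.toFinset, fun x => hfin.mem_toFinset, ?_⟩
  set J := hfin.toFinset with hJ
  have hJmem : ∀ x ∈ J, IsJointPt 𝓛 x := fun x hx => hfin.mem_toFinset.mp hx
  set e : ℝ := (1 : ℝ) / ((n : ℝ) - 1) with he
  have hn1 : (1 : ℝ) ≤ (n : ℝ) - 1 := by
    have : (2 : ℝ) ≤ (n : ℝ) := by exact_mod_cast hn
    linarith
  have he0 : 0 < e := by rw [he]; positivity
  have he1 : e ≤ 1 := by
    rw [he, div_le_one (by linarith)]; linarith
  -- every joint has at least one line of each family through it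
  have hN1 : ∀ x ∈ J, ∀ i, 1 ≤ (linesThrough (𝓛 i) x : ℝ) := by
    intro x hx i
    obtain ⟨ℓ, hmem, hthru⟩ := hJmem x hx
    have : 0 < linesThrough (𝓛 i) x :=
      Finset.card_pos.mpr ⟨ℓ i, Finset.mem_filter.mpr ⟨hmem i, hthru i⟩⟩
    exact_mod_cast this
  set g : (Fin n → ℝ) → ℝ :=
    fun x => ∏ i ∈ Finset.univ.erase i0, (linesThrough (𝓛 i) x : ℝ) ^ e with hg
  have hgnn : ∀ x, 0 ≤ g x := fun x =>
    Finset.prod_nonneg fun i _ => Real.rpow_nonneg (Nat.cast_nonneg _) e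
  -- cardinality of the erased index set
  have hcard_erase : (Finset.univ.erase i0).card = n - 1 := by
    rw [Finset.card_erase_of_mem (Finset.mem_univ i0), Finset.card_univ, Fintype.card_fin]
  have hsum_e : ∑ _i ∈ Finset.univ.erase i0, e = 1 := by
    rw [Finset.sum_const, hcard_erase, nsmul_eq_mul, he]
    have h1n : (1:ℕ) ≤ n := by omega
    rw [Nat.cast_sub h1n, Nat.cast_one]
    field_simp
  -- Step 1: pointwise bound
  have hstep1 : ∀ x ∈ J, (∏ i, (linesThrough (𝓛 i) x : ℝ)) ^ e
      ≤ (linesThrough (𝓛 i0) x : ℝ) * g x := by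
    intro x hx
    rw [← Real.finset_prod_rpow Finset.univ _ (fun i _ => Nat.cast_nonneg _) e,
      ← Finset.mul_prod_erase Finset.univ _ (Finset.mem_univ i0)]
    refine mul_le_mul_of_nonneg_right ?_ (hgnn x)
    calc (linesThrough (𝓛 i0) x : ℝ) ^ e
        ≤ (linesThrough (𝓛 i0) x : ℝ) ^ (1:ℝ) :=
          Real.rpow_le_rpow_of_exponent_le (hN1 x hx i0) he1
      _ = _ := Real.rpow_one _
  -- Step 2: double counting over lines of 𝓛 i0
  have hswap : ∑ x ∈ J, (linesThrough (𝓛 i0) x : ℝ) * g x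
      = ∑ ℓ₀ ∈ 𝓛 i0, ∑ x ∈ J.filter (fun x => x ∈ ℓ₀), g x := by
    have h1 : ∀ x ∈ J, (linesThrough (𝓛 i0) x : ℝ) * g x
        = ∑ ℓ ∈ 𝓛 i0, if x ∈ ℓ then g x else 0 := by
      intro x _
      rw [← Finset.sum_filter, Finset.sum_const, nsmul_eq_mul]
      rfl
    rw [Finset.sum_congr rfl h1, Finset.sum_comm]
    exact Finset.sum_congr rfl fun ℓ _ => (Finset.sum_filter _ _).symm
  -- Step 3: per-line Hölder bound
  have hline : ∀ ℓ₀ ∈ 𝓛 i0, ∑ x ∈ J.filter (fun x => x ∈ ℓ₀), g x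
      ≤ ∏ i ∈ Finset.univ.erase i0, ((𝓛 i).card : ℝ) ^ e := by
    intro ℓ₀ hℓ₀
    set J' := J.filter (fun x => x ∈ ℓ₀) with hJ'
    rcases J'.eq_empty_or_nonempty with hemp | hne
    · rw [hemp, Finset.sum_empty]
      exact Finset.prod_nonneg fun i _ => Real.rpow_nonneg (Nat.cast_nonneg _) e
    set S : Fin n → ℝ := fun i => ∑ x ∈ J', (linesThrough (𝓛 i) x : ℝ) with hS
    have hSnn : ∀ i, 0 ≤ S i := fun i =>
      Finset.sum_nonneg fun x _ => Nat.cast_nonneg _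
    have hS1 : ∀ i, 1 ≤ S i := by
      intro i
      obtain ⟨x₀, hx₀⟩ := hne
      calc (1:ℝ) ≤ (linesThrough (𝓛 i) x₀ : ℝ) := hN1 x₀ (Finset.mem_filter.mp hx₀).1 i
        _ ≤ S i := Finset.single_le_sum (f := fun x => (linesThrough (𝓛 i) x : ℝ))
            (fun x _ => Nat.cast_nonneg _) hx₀
    have hSpos : ∀ i, (0:ℝ) < S i := fun i => lt_of_lt_of_le one_pos (hS1 i)
    -- incidence count: each line from another family meets ℓ₀ in at most one joint
    have hScard : ∀ i ∈ Finset.univ.erase i0, S i ≤ ((𝓛 i).card : ℝ) := by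
      intro i hi
      have hii0 : i ≠ i0 := (Finset.mem_erase.mp hi).1
      have hnat : ∑ x ∈ J', linesThrough (𝓛 i) x ≤ (𝓛 i).card := by
        have : ∑ x ∈ J', linesThrough (𝓛 i) x
            = ∑ ℓ ∈ 𝓛 i, (J'.filter (fun x => x ∈ ℓ)).card := by
          unfold linesThrough
          simp only [Finset.card_filter]
          exact Finset.sum_comm
        rw [this]
        refine le_trans (Finset.sum_le_sum (g := fun _ => 1) fun ℓ hℓ => ?_) (by simp)
        show (J'.filter (fun x => x ∈ ℓ)).card ≤ 1
        refine Finset.card_le_one.mpr fun x hx y hy => ?_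
        have hx' := Finset.mem_filter.mp hx
        have hy' := Finset.mem_filter.mp hy
        have hxℓ₀ := (Finset.mem_filter.mp hx'.1).2
        have hyℓ₀ := (Finset.mem_filter.mp hy'.1).2
        have hℓne : ℓ ≠ ℓ₀ := fun h =>
          Finset.disjoint_left.mp (hdisj i i0 hii0) hℓ (h ▸ hℓ₀)
        exact eq_pt_of_two_lines (hlines i ℓ hℓ) (hlines i0 ℓ₀ hℓ₀) hℓne
          hx'.2 hy'.2 hxℓ₀ hyℓ₀
      calc S i = ((∑ x ∈ J', linesThrough (𝓛 i) x : ℕ) : ℝ) := by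
            rw [hS]; push_cast; rfl
        _ ≤ ((𝓛 i).card : ℝ) := by exact_mod_cast hnat
    -- AM-GM / Hölder
    set P : ℝ := ∏ i ∈ Finset.univ.erase i0, (S i) ^ e with hP
    have hPnn : 0 ≤ P := Finset.prod_nonneg fun i _ => Real.rpow_nonneg (hSnn i) e
    have hgP : ∀ x ∈ J', g x = P * ∏ i ∈ Finset.univ.erase i0,
        ((linesThrough (𝓛 i) x : ℝ) / S i) ^ e := by
      intro x _
      rw [hg, hP]
      rw [← Finset.prod_mul_distrib]
      refine Finset.prod_congr rfl fun i _ => ?_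
      rw [Real.div_rpow (Nat.cast_nonneg _) (hSnn i)]
      field_simp [ne_of_gt (Real.rpow_pos_of_pos (hSpos i) e)]
    have hamgm : ∀ x ∈ J', ∏ i ∈ Finset.univ.erase i0,
        ((linesThrough (𝓛 i) x : ℝ) / S i) ^ e
        ≤ ∑ i ∈ Finset.univ.erase i0, e * ((linesThrough (𝓛 i) x : ℝ) / S i) := by
      intro x _
      exact Real.geom_mean_le_arith_mean_weighted _ (fun _ => e)
        (fun i => (linesThrough (𝓛 i) x : ℝ) / S i)
        (fun i _ => he0.le) hsum_e
        (fun i _ => div_nonneg (Nat.cast_nonneg _) (hSnn i))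
    have hsum_le_one : ∑ x ∈ J', ∑ i ∈ Finset.univ.erase i0,
        e * ((linesThrough (𝓛 i) x : ℝ) / S i) = 1 := by
      rw [Finset.sum_comm]
      calc ∑ i ∈ Finset.univ.erase i0, ∑ x ∈ J', e * ((linesThrough (𝓛 i) x : ℝ) / S i)
          = ∑ i ∈ Finset.univ.erase i0, e * (S i / S i) := by
            refine Finset.sum_congr rfl fun i _ => ?_
            rw [← Finset.mul_sum, ← Finset.sum_div]
        _ = ∑ _i ∈ Finset.univ.erase i0, e := by
            refine Finset.sum_congr rfl fun i _ => ?_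
            rw [div_self (ne_of_gt (hSpos i)), mul_one]
        _ = 1 := hsum_e
    calc ∑ x ∈ J', g x
        = P * ∑ x ∈ J', ∏ i ∈ Finset.univ.erase i0,
            ((linesThrough (𝓛 i) x : ℝ) / S i) ^ e := by
          rw [Finset.mul_sum]; exact Finset.sum_congr rfl hgP
      _ ≤ P * ∑ x ∈ J', ∑ i ∈ Finset.univ.erase i0,
            e * ((linesThrough (𝓛 i) x : ℝ) / S i) :=
          mul_le_mul_of_nonneg_left (Finset.sum_le_sum hamgm) hPnn
      _ = P := by rw [hsum_le_one, mul_one]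
      _ ≤ ∏ i ∈ Finset.univ.erase i0, ((𝓛 i).card : ℝ) ^ e :=
          Finset.prod_le_prod (fun i _ => Real.rpow_nonneg (hSnn i) e)
            (fun i hi => Real.rpow_le_rpow (hSnn i) (hScard i hi) he0.le)
  -- combine
  rcases J.eq_empty_or_nonempty with hemp | hJne
  · rw [hemp, Finset.sum_empty]
    have : (0:ℝ) ≤ (∏ i, ((𝓛 i).card : ℝ)) ^ e :=
      Real.rpow_nonneg (Finset.prod_nonneg fun i _ => Nat.cast_nonneg _) e
    linarith
  · have hLpos : ∀ i, 1 ≤ ((𝓛 i).card : ℝ) := by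
      intro i
      obtain ⟨x₀, hx₀⟩ := hJne
      obtain ⟨ℓ, hmem, _⟩ := hJmem x₀ hx₀
      have : 0 < (𝓛 i).card := Finset.card_pos.mpr ⟨ℓ i, hmem i⟩
      exact_mod_cast this
    set Q : ℝ := ∏ i ∈ Finset.univ.erase i0, ((𝓛 i).card : ℝ) ^ e with hQ
    have hQnn : 0 ≤ Q := Finset.prod_nonneg fun i _ => Real.rpow_nonneg (Nat.cast_nonneg _) e
    calc ∑ x ∈ J, (∏ i, (linesThrough (𝓛 i) x : ℝ)) ^ e
        ≤ ∑ x ∈ J, (linesThrough (𝓛 i0) x : ℝ) * g x := Finset.sum_le_sum hstep1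
      _ = ∑ ℓ₀ ∈ 𝓛 i0, ∑ x ∈ J.filter (fun x => x ∈ ℓ₀), g x := hswap
      _ ≤ ∑ _ℓ₀ ∈ 𝓛 i0, Q := Finset.sum_le_sum hline
      _ = ((𝓛 i0).card : ℝ) * Q := by rw [Finset.sum_const, nsmul_eq_mul]
      _ ≤ 100 * Q := by
          refine mul_le_mul_of_nonneg_right ?_ hQnn
          exact_mod_cast hsmall
      _ ≤ 100 * (((𝓛 i0).card : ℝ) ^ e * Q) := by
          refine mul_le_mul_of_nonneg_left ?_ (by norm_num)
          nth_rewrite 1 [← one_mul Q]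
          refine mul_le_mul_of_nonneg_right ?_ hQnn
          calc (1:ℝ) = (1:ℝ) ^ e := (Real.one_rpow e).symm
            _ ≤ ((𝓛 i0).card : ℝ) ^ e :=
              Real.rpow_le_rpow zero_le_one (hLpos i0) he0.le
      _ = 100 * (∏ i, ((𝓛 i).card : ℝ)) ^ e := by
          rw [← Real.finset_prod_rpow Finset.univ _ (fun i _ => Nat.cast_nonneg _) e,
            ← Finset.mul_prod_erase Finset.univ _ (Finset.mem_univ i0)]
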